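/- If θ : L → L' is a loop homomorphism, then the map θ₊ : Mlt_ℓ(L) → Mlt_ℓ(θ(L)) defined by θ₊(α)(θ(x)) = θ(α(x)) for all x ∈ L is a well-defined group epimorphism from the left multiplication group of L onto the left multiplication group of the image loop θ(L). -/

import Mathlib

/-- A loop: a binary operation with two-sided identity whose left and right
translations are bijections. -/
structure LoopStr (L : Type*) where
  mul : L → L → L
  one : L
  one_mul : ∀ x, mul one x = x
  mul_one : ∀ x, mul x one = x
  mul_left_bij : ∀ x, Function.Bijective (mul x)
  mul_right_bij : ∀ x, Function.Bijective fun y => mul y x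

/-- Left translation `λ_x` as a permutation. -/
noncomputable def LoopStr.lam {L : Type*} (S : LoopStr L) (x : L) : Equiv.Perm L :=
  Equiv.ofBijective _ (S.mul_left_bij x)

/-- Right translation `ρ_x` as a permutation. -/
noncomputable def LoopStr.rho {L : Type*} (S : LoopStr L) (x : L) : Equiv.Perm L :=
  Equiv.ofBijective _ (S.mul_right_bij x)

/-- The left multiplication group `Mlt_ℓ(L)`. -/
noncomputable def LoopStr.Mlt {L : Type*} (S : LoopStr L) : Subgroup (Equiv.Perm L) :=
  Subgroup.closure (Set.range S.lam)

/-- Left division: `ldiv a b` is the unique solution `x` of `a·x = b`. -/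
noncomputable def LoopStr.ldiv {L : Type*} (S : LoopStr L) (a b : L) : L := (S.lam a).symm b

/-- Right division: `rdiv a b` is the unique solution `x` of `x·b = a`. -/
noncomputable def LoopStr.rdiv {L : Type*} (S : LoopStr L) (a b : L) : L := (S.rho b).symm a

/-- The inner mapping `δ_{x,y} = λ_{xy}⁻¹ ∘ λ_x ∘ λ_y`. -/
noncomputable def LoopStr.delta {L : Type*} (S : LoopStr L) (x y : L) : Equiv.Perm L :=
  (S.lam (S.mul x y))⁻¹ * S.lam x * S.lam y

/-- A loop homomorphism: preserves the multiplication and the identity. -/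
def IsLoopHom {L L' : Type*} (S : LoopStr L) (S' : LoopStr L') (θ : L → L') : Prop :=
  θ S.one = S'.one ∧ ∀ x y, θ (S.mul x y) = S'.mul (θ x) (θ y)

/-- A subloop: a subset containing the identity, closed under multiplication
and both divisions. -/
def IsSubloop {L : Type*} (S : LoopStr L) (N : Set L) : Prop :=
  S.one ∈ N ∧ (∀ a ∈ N, ∀ b ∈ N, S.mul a b ∈ N) ∧
    (∀ a ∈ N, ∀ b ∈ N, S.ldiv a b ∈ N) ∧ (∀ a ∈ N, ∀ b ∈ N, S.rdiv a b ∈ N)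

/-- A normal subloop: `ab·N = a·(bN) = (aN)·b` for all `a, b`. -/
def IsNormalSubloop {L : Type*} (S : LoopStr L) (N : Set L) : Prop :=
  IsSubloop S N ∧ ∀ a b : L,
    ((fun n => S.mul (S.mul a b) n) '' N = (fun n => S.mul a (S.mul b n)) '' N) ∧
    ((fun n => S.mul (S.mul a b) n) '' N = (fun n => S.mul (S.mul a n) b) '' N)

/-- If `θ : L → L'` is a loop homomorphism (here with image
loop `L' = θ(L)`, i.e. `θ` surjective), then `θ₊ : Mlt_ℓ(L) → Mlt_ℓ(θ(L))`,
determined by `θ₊(α)(θ x) = θ(α x)`, is a well-defined group epimorphism. -/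
theorem stmt0 {L L' : Type*} (S : LoopStr L) (S' : LoopStr L') (θ : L → L')
    (hθ : IsLoopHom S S' θ) (hsurj : Function.Surjective θ) :
    ∃ Φ : ↥S.Mlt →* ↥S'.Mlt, Function.Surjective Φ ∧
      ∀ (α : ↥S.Mlt) (x : L),
        ((Φ α : Equiv.Perm L') (θ x)) = θ ((α : Equiv.Perm L) x) := by
  classical
  have hmul := hθ.2
  have hex : ∀ α ∈ S.Mlt, ∃ β ∈ S'.Mlt, ∀ x, β (θ x) = θ (α x) := by
    intro α hα
    induction hα using Subgroup.closure_induction with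
    | mem g hg =>
      obtain ⟨x, rfl⟩ := hg
      exact ⟨S'.lam (θ x), Subgroup.subset_closure ⟨θ x, rfl⟩,
        fun y => by simpa [LoopStr.lam] using (hmul x y).symm⟩
    | one => exact ⟨1, one_mem _, fun y => rfl⟩
    | mul a b _ _ ha hb =>
      obtain ⟨βa, hβa, ha⟩ := ha
      obtain ⟨βb, hβb, hb⟩ := hb
      exact ⟨βa * βb, mul_mem hβa hβb,
        fun x => by simp [Equiv.Perm.mul_apply, hb, ha]⟩
    | inv a _ ha =>
      obtain ⟨β, hβ, hc⟩ := ha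
      refine ⟨β⁻¹, inv_mem hβ, fun x => ?_⟩
      have h1 : β (θ (a⁻¹ x)) = θ x := by
        rw [hc (a⁻¹ x), Equiv.Perm.coe_inv a, Equiv.apply_symm_apply]
      rw [← h1, Equiv.Perm.coe_inv β, Equiv.symm_apply_apply]
  set ψ : ↥S.Mlt → ↥S'.Mlt := fun α =>
    ⟨(hex α α.2).choose, (hex α α.2).choose_spec.1⟩ with hψ
  have hspec : ∀ (α : ↥S.Mlt) (x : L), (ψ α : Equiv.Perm L') (θ x) = θ ((α : Equiv.Perm L) x) :=
    fun α x => (hex α α.2).choose_spec.2 x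
  have hψmul : ∀ a b : ↥S.Mlt, ψ (a * b) = ψ a * ψ b := by
    intro a b
    ext y
    obtain ⟨x, rfl⟩ := hsurj y
    simp only [Subgroup.coe_mul, Equiv.Perm.mul_apply, hspec (a * b) x,
      hspec b x, hspec a ((b : Equiv.Perm L) x)]
  refine ⟨MonoidHom.mk' ψ hψmul, ?_, fun α x => hspec α x⟩
  intro β
  have hsub : S'.Mlt ≤ Subgroup.map S'.Mlt.subtype (MonoidHom.mk' ψ hψmul).range := by
    apply Subgroup.closure_le _ |>.mpr
    rintro g ⟨y, rfl⟩
    obtain ⟨x, rfl⟩ := hsurj y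
    have hx : S.lam x ∈ S.Mlt := Subgroup.subset_closure ⟨x, rfl⟩
    refine ⟨ψ ⟨S.lam x, hx⟩, ⟨⟨S.lam x, hx⟩, rfl⟩, ?_⟩
    ext z
    obtain ⟨w, rfl⟩ := hsurj z
    simpa [LoopStr.lam, hmul] using hspec ⟨S.lam x, hx⟩ w
  obtain ⟨γ, hγ, hγβ⟩ := hsub β.2
  obtain ⟨α, rfl⟩ := hγ
  exact ⟨α, Subtype.ext hγβ⟩
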